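/- arXiv:1411.5275 — 5 statements merged into one kernel-verified Lean document; each statement's English description precedes it below -/
import Mathlib

section
/- Let G be a twin-free graph of maximum degree k and let C be an identifying code of G with k ≥ |C| + 1. Then |V(G)| ≤ |C|²/6 + (2k+5)|C|/6. -/
open Finset

/-- If `G` is a twin-free graph of maximum degree `k` and `C` is an identifying code of `G`
with `k ≥ |C| + 1`, then `|V| ≤ |C|²/6 + (2k+5)|C|/6`. -/
theorem stmt_0 {V : Type*} [Fintype V] [DecidableEq V]
    (G : SimpleGraph V) [DecidableRel G.Adj] (k : ℕ)
    (hdeg : ∀ v : V, G.degree v ≤ k)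
    (htwinfree : ∀ u v : V,
      insert u (G.neighborFinset u) = insert v (G.neighborFinset v) → u = v)
    (C : Finset V)
    (hdom : ∀ u : V, ((insert u (G.neighborFinset u)) ∩ C).Nonempty)
    (hsep : ∀ u v : V,
      (insert u (G.neighborFinset u)) ∩ C = (insert v (G.neighborFinset v)) ∩ C → u = v)
    (hk : C.card + 1 ≤ k) :
    (Fintype.card V : ℝ) ≤ (C.card : ℝ) ^ 2 / 6 + (2 * (k : ℝ) + 5) * C.card / 6 := by
  classical
  set t : V → Finset V := fun u => insert u (G.neighborFinset u) ∩ C with ht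
  have htne : ∀ u, (t u).Nonempty := hdom
  have htinj : Function.Injective t := fun u v h => hsep u v h
  have htsub : ∀ u, t u ⊆ C := fun u => inter_subset_right
  -- incidence bound
  have hS : ∑ u : V, (t u).card ≤ C.card * (k + 1) := by
    have h1 : ∀ u : V, (t u).card
        = ∑ x ∈ C, if x ∈ insert u (G.neighborFinset u) then 1 else 0 := by
      intro u
      rw [ht]
      simp only
      rw [inter_comm, ← Finset.filter_mem_eq_inter, Finset.card_filter]
    calc ∑ u : V, (t u).card
        = ∑ u : V, ∑ x ∈ C, if x ∈ insert u (G.neighborFinset u) then 1 else 0 := by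
          simp_rw [h1]
      _ = ∑ x ∈ C, ∑ u : V, if x ∈ insert u (G.neighborFinset u) then 1 else 0 :=
          Finset.sum_comm
      _ ≤ ∑ x ∈ C, (k + 1) := by
          refine Finset.sum_le_sum fun x _ => ?_
          rw [← Finset.card_filter]
          have hfe : (Finset.univ.filter fun u => x ∈ insert u (G.neighborFinset u))
              = insert x (G.neighborFinset x) := by
            ext u
            simp [SimpleGraph.mem_neighborFinset, G.adj_comm, eq_comm]
          rw [hfe]
          calc (insert x (G.neighborFinset x)).card
              ≤ (G.neighborFinset x).card + 1 := Finset.card_insert_le _ _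
            _ ≤ k + 1 := by
                have := hdeg x
                rw [SimpleGraph.card_neighborFinset_eq_degree]
                omega
      _ = C.card * (k + 1) := by rw [Finset.sum_const, smul_eq_mul]
  set A1 : Finset V := Finset.univ.filter fun u => (t u).card = 1 with hA1def
  set A2 : Finset V := Finset.univ.filter fun u => (t u).card = 2 with hA2def
  set A3 : Finset V := Finset.univ.filter fun u => 3 ≤ (t u).card with hA3def
  have ha : A1.card ≤ C.card := by
    have : A1.card ≤ (C.powersetCard 1).card := by
      apply Finset.card_le_card_of_injOn t
      · intro u hu
        rw [Finset.mem_coe, Finset.mem_powersetCard]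
        exact ⟨htsub u, (Finset.mem_filter.mp (Finset.mem_coe.mp hu)).2⟩
      · exact fun u _ v _ h => htinj h
    simpa [Nat.choose_one_right] using this
  have hb : A2.card ≤ Nat.choose C.card 2 := by
    have : A2.card ≤ (C.powersetCard 2).card := by
      apply Finset.card_le_card_of_injOn t
      · intro u hu
        rw [Finset.mem_coe, Finset.mem_powersetCard]
        exact ⟨htsub u, (Finset.mem_filter.mp (Finset.mem_coe.mp hu)).2⟩
      · exact fun u _ v _ h => htinj h
    simpa using this
  have hcover : (Finset.univ : Finset V) ⊆ A1 ∪ A2 ∪ A3 := by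
    intro u _
    have h1 := (htne u).card_pos
    simp only [Finset.mem_union, hA1def, hA2def, hA3def, Finset.mem_filter,
      Finset.mem_univ, true_and]
    omega
  have hn : Fintype.card V ≤ A1.card + A2.card + A3.card := by
    calc Fintype.card V = (Finset.univ : Finset V).card := rfl
      _ ≤ (A1 ∪ A2 ∪ A3).card := Finset.card_le_card hcover
      _ ≤ (A1 ∪ A2).card + A3.card := Finset.card_union_le _ _
      _ ≤ A1.card + A2.card + A3.card := by
          have := Finset.card_union_le A1 A2
          omega
  -- lower bound on the sum
  have hd12 : Disjoint A1 A2 := by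
    rw [Finset.disjoint_filter]
    intro u _ h1
    omega
  have hd123 : Disjoint (A1 ∪ A2) A3 := by
    rw [Finset.disjoint_union_left]
    constructor <;> (rw [Finset.disjoint_filter]; intro u _ h1; omega)
  have hsum : A1.card + 2 * A2.card + 3 * A3.card ≤ ∑ u : V, (t u).card := by
    have hsub : A1 ∪ A2 ∪ A3 ⊆ Finset.univ := Finset.subset_univ _
    calc A1.card + 2 * A2.card + 3 * A3.card
        ≤ (∑ u ∈ A1, (t u).card) + (∑ u ∈ A2, (t u).card) + (∑ u ∈ A3, (t u).card) := by
          have h1 : A1.card * 1 ≤ ∑ u ∈ A1, (t u).card := by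
            rw [← smul_eq_mul]
            apply Finset.card_nsmul_le_sum
            intro u hu
            exact le_of_eq ((Finset.mem_filter.mp hu).2).symm
          have h2 : A2.card * 2 ≤ ∑ u ∈ A2, (t u).card := by
            rw [← smul_eq_mul]
            apply Finset.card_nsmul_le_sum
            intro u hu
            exact le_of_eq ((Finset.mem_filter.mp hu).2).symm
          have h3 : A3.card * 3 ≤ ∑ u ∈ A3, (t u).card := by
            rw [← smul_eq_mul]
            apply Finset.card_nsmul_le_sum
            intro u hu
            exact (Finset.mem_filter.mp hu).2
          omega
      _ = ∑ u ∈ A1 ∪ A2 ∪ A3, (t u).card := by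
          rw [Finset.sum_union hd123, Finset.sum_union hd12]
      _ ≤ ∑ u : V, (t u).card := Finset.sum_le_sum_of_subset hsub
  -- put everything together over ℝ
  have hchoose : (Nat.choose C.card 2 : ℝ) = (C.card : ℝ) * ((C.card : ℝ) - 1) / 2 :=
    Nat.cast_choose_two ℝ C.card
  have hbR : (A2.card : ℝ) ≤ (C.card : ℝ) * ((C.card : ℝ) - 1) / 2 := by
    rw [← hchoose]; exact_mod_cast hb
  have haR : (A1.card : ℝ) ≤ (C.card : ℝ) := by exact_mod_cast ha
  have hnR : (Fintype.card V : ℝ) ≤ (A1.card : ℝ) + A2.card + A3.card := by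
    exact_mod_cast hn
  have hsumR : (A1.card : ℝ) + 2 * A2.card + 3 * A3.card ≤ (C.card : ℝ) * (k + 1) := by
    have := hsum.trans hS
    exact_mod_cast this
  nlinarith [hbR, haR, hnR, hsumR]
end

section
/- Let G be a graph of diameter 2 with a resolving set S of size β(G). Then G has a locating-dominating set of size at most β(G) + 1. Consequently β(G) ≤ γLD(G) ≤ β(G) + 1. -/
open Finset

/-- Let `G` be a graph of diameter 2 with a minimum resolving set `S` (so `S.card = β(G)`).
Then `G` has a locating-dominating set of size at most `β(G) + 1`; consequently
`β(G) ≤ γLD(G) ≤ β(G) + 1`. -/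
theorem stmt_1 {V : Type*} [Fintype V] [DecidableEq V]
    (G : SimpleGraph V) [DecidableRel G.Adj]
    (hconn : G.Connected) (hdiam : ∀ u v : V, G.dist u v ≤ 2)
    (S : Finset V)
    (hres : ∀ u v : V, u ≠ v → ∃ x ∈ S, G.dist x u ≠ G.dist x v)
    (hmin : ∀ T : Finset V,
      (∀ u v : V, u ≠ v → ∃ x ∈ T, G.dist x u ≠ G.dist x v) → S.card ≤ T.card) :
    (∃ D : Finset V,
      (∀ u : V, ((insert u (G.neighborFinset u)) ∩ D).Nonempty) ∧
      (∀ u v : V, u ∉ D → v ∉ D →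
        (insert u (G.neighborFinset u)) ∩ D = (insert v (G.neighborFinset v)) ∩ D → u = v) ∧
      D.card ≤ S.card + 1) ∧
    (∀ D : Finset V,
      (∀ u : V, ((insert u (G.neighborFinset u)) ∩ D).Nonempty) →
      (∀ u v : V, u ∉ D → v ∉ D →
        (insert u (G.neighborFinset u)) ∩ D = (insert v (G.neighborFinset v)) ∩ D → u = v) →
      S.card ≤ D.card) := by
  -- basic distance facts
  have h0 : ∀ x u : V, G.dist x u = 0 ↔ x = u := fun x u => hconn.dist_eq_zero_iff
  have h2 : ∀ x u : V, x ≠ u → ¬ G.Adj x u → G.dist x u = 2 := by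
    intro x u hne hadj
    have hle := hdiam x u
    have hne0 : G.dist x u ≠ 0 := fun h => hne ((h0 x u).mp h)
    have hne1 : G.dist x u ≠ 1 := fun h =>
      hadj (SimpleGraph.dist_eq_one_iff_adj.mp h)
    omega
  -- membership characterization
  have hmem : ∀ x u : V, x ∈ insert u (G.neighborFinset u) ↔ x = u ∨ G.Adj u x := by
    intro x u; simp [SimpleGraph.mem_neighborFinset]
  -- distance determined by closed neighborhood membership, for x ≠ u
  have hkey : ∀ x u : V, x ≠ u →
      (x ∈ insert u (G.neighborFinset u) → G.dist x u = 1) ∧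
      (x ∉ insert u (G.neighborFinset u) → G.dist x u = 2) := by
    intro x u hne
    constructor
    · intro hx
      rcases (hmem x u).mp hx with h | h
      · exact absurd h hne
      · exact SimpleGraph.dist_eq_one_iff_adj.mpr h.symm
    · intro hx
      refine h2 x u hne fun h => hx ((hmem x u).mpr (Or.inr h.symm))
  constructor
  · -- existence of LD set
    by_cases hdom : ∀ u : V, ((insert u (G.neighborFinset u)) ∩ S).Nonempty
    · refine ⟨S, hdom, ?_, Nat.le_succ _⟩
      intro u v hu hv heq
      by_contra hne
      obtain ⟨x, hxS, hxd⟩ := hres u v hne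
      have hxu : x ≠ u := fun h => hu (h ▸ hxS)
      have hxv : x ≠ v := fun h => hv (h ▸ hxS)
      apply hxd
      by_cases hx : x ∈ insert u (G.neighborFinset u)
      · have hx' : x ∈ insert v (G.neighborFinset v) := by
          have : x ∈ (insert v (G.neighborFinset v)) ∩ S := heq ▸ mem_inter.mpr ⟨hx, hxS⟩
          exact (mem_inter.mp this).1
        rw [(hkey x u hxu).1 hx, (hkey x v hxv).1 hx']
      · have hx' : x ∉ insert v (G.neighborFinset v) := by
          intro h
          have : x ∈ (insert u (G.neighborFinset u)) ∩ S := heq ▸ mem_inter.mpr ⟨h, hxS⟩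
          exact hx (mem_inter.mp this).1
        rw [(hkey x u hxu).2 hx, (hkey x v hxv).2 hx']
    · push_neg at hdom
      obtain ⟨u₀, hu₀⟩ := hdom
      have hu₀S : u₀ ∉ S := by
        intro h
        have : u₀ ∈ (insert u₀ (G.neighborFinset u₀)) ∩ S :=
          mem_inter.mpr ⟨mem_insert_self _ _, h⟩
        simp [hu₀] at this
      have hbad : ∀ x ∈ S, x ∉ insert u₀ (G.neighborFinset u₀) := by
        intro x hx hmem'
        have : x ∈ (insert u₀ (G.neighborFinset u₀)) ∩ S := mem_inter.mpr ⟨hmem', hx⟩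
        simp [hu₀] at this
      refine ⟨insert u₀ S, ?_, ?_, ?_⟩
      · -- domination
        intro u
        by_contra hemp
        rw [not_nonempty_iff_eq_empty] at hemp
        have huu₀ : u ≠ u₀ := by
          intro h
          have : u₀ ∈ (insert u (G.neighborFinset u)) ∩ insert u₀ S :=
            mem_inter.mpr ⟨h ▸ mem_insert_self _ _, mem_insert_self _ _⟩
          simp [hemp] at this
        have hbadu : ∀ x ∈ S, x ∉ insert u (G.neighborFinset u) := by
          intro x hx hmem'
          have : x ∈ (insert u (G.neighborFinset u)) ∩ insert u₀ S :=
            mem_inter.mpr ⟨hmem', mem_insert_of_mem hx⟩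
          simp [hemp] at this
        obtain ⟨x, hxS, hxd⟩ := hres u u₀ huu₀
        have hxu : x ≠ u := by
          intro h; exact hbadu x hxS (h ▸ mem_insert_self _ _)
        have hxu₀ : x ≠ u₀ := fun h => hu₀S (h ▸ hxS)
        exact hxd (by rw [(hkey x u hxu).2 (hbadu x hxS), (hkey x u₀ hxu₀).2 (hbad x hxS)])
      · -- separation
        intro u v hu hv heq
        have huS : u ∉ S := fun h => hu (mem_insert_of_mem h)
        have hvS : v ∉ S := fun h => hv (mem_insert_of_mem h)
        by_contra hne
        obtain ⟨x, hxS, hxd⟩ := hres u v hne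
        have hxu : x ≠ u := fun h => huS (h ▸ hxS)
        have hxv : x ≠ v := fun h => hvS (h ▸ hxS)
        have hxD : x ∈ insert u₀ S := mem_insert_of_mem hxS
        apply hxd
        by_cases hx : x ∈ insert u (G.neighborFinset u)
        · have hx' : x ∈ insert v (G.neighborFinset v) := by
            have : x ∈ (insert v (G.neighborFinset v)) ∩ insert u₀ S :=
              heq ▸ mem_inter.mpr ⟨hx, hxD⟩
            exact (mem_inter.mp this).1
          rw [(hkey x u hxu).1 hx, (hkey x v hxv).1 hx']
        · have hx' : x ∉ insert v (G.neighborFinset v) := by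
            intro h
            have : x ∈ (insert u (G.neighborFinset u)) ∩ insert u₀ S :=
              heq ▸ mem_inter.mpr ⟨h, hxD⟩
            exact hx (mem_inter.mp this).1
          rw [(hkey x u hxu).2 hx, (hkey x v hxv).2 hx']
      · exact card_insert_le _ _
  · -- every LD set has size ≥ |S|
    intro D hdom hsep
    apply hmin
    intro u v hne
    by_cases hu : u ∈ D
    · refine ⟨u, hu, ?_⟩
      rw [(h0 u u).mpr rfl]
      intro h
      exact hne ((h0 u v).mp h.symm)
    · by_cases hv : v ∈ D
      · refine ⟨v, hv, ?_⟩
        rw [(h0 v v).mpr rfl]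
        intro h
        exact hne ((h0 v u).mp h).symm
      · have hneq : (insert u (G.neighborFinset u)) ∩ D ≠ (insert v (G.neighborFinset v)) ∩ D :=
          fun h => hne (hsep u v hu hv h)
        obtain ⟨x, hx⟩ : ∃ x, (x ∈ (insert u (G.neighborFinset u)) ∩ D ∧
            x ∉ (insert v (G.neighborFinset v)) ∩ D) ∨
            (x ∈ (insert v (G.neighborFinset v)) ∩ D ∧
            x ∉ (insert u (G.neighborFinset u)) ∩ D) := by
          by_contra hc
          push_neg at hc
          apply hneq
          ext y
          have := hc y
          constructor
          · intro hy
            exact this.1 hy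
          · intro hy
            exact this.2 hy
        rcases hx with ⟨hx1, hx2⟩ | ⟨hx1, hx2⟩
        · obtain ⟨hxu, hxD⟩ := mem_inter.mp hx1
          have hxnu : x ≠ u := fun h => hu (h ▸ hxD)
          have hxnv : x ≠ v := fun h => hv (h ▸ hxD)
          have hxv : x ∉ insert v (G.neighborFinset v) := fun h =>
            hx2 (mem_inter.mpr ⟨h, hxD⟩)
          exact ⟨x, hxD, by
            rw [(hkey x u hxnu).1 hxu, (hkey x v hxnv).2 hxv]; omega⟩
        · obtain ⟨hxv, hxD⟩ := mem_inter.mp hx1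
          have hxnu : x ≠ u := fun h => hu (h ▸ hxD)
          have hxnv : x ≠ v := fun h => hv (h ▸ hxD)
          have hxu : x ∉ insert u (G.neighborFinset u) := fun h =>
            hx2 (mem_inter.mpr ⟨h, hxD⟩)
          exact ⟨x, hxD, by
            rw [(hkey x u hxnu).2 hxu, (hkey x v hxnv).1 hxv]; omega⟩
end

section
/- Let G be a twin-free graph of diameter 2. Then β(G) ≤ γID(G) ≤ 2β(G) + 2, where γID(G) is the minimum size of an identifying code and β(G) is the metric dimension. -/
open Finset

/-- Separating a finite set of pairwise non-twin vertices with `card - 1` extra vertices. -/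
lemma sep_aux {V : Type*} [Fintype V] [DecidableEq V] (G : SimpleGraph V) [DecidableRel G.Adj]
    (htwinfree : ∀ u v : V,
      insert u (G.neighborFinset u) = insert v (G.neighborFinset v) → u = v) :
    ∀ (n : ℕ) (W : Finset V), W.card ≤ n →
      ∃ A : Finset V, A.card ≤ W.card - 1 ∧
        ∀ u ∈ W, ∀ v ∈ W,
          insert u (G.neighborFinset u) ∩ A = insert v (G.neighborFinset v) ∩ A → u = v := by
  intro n
  induction n with
  | zero =>
    intro W hW
    refine ⟨∅, by simp, ?_⟩
    intro u hu
    simp [Finset.card_eq_zero.mp (Nat.le_zero.mp hW)] at hu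
  | succ n ih =>
    intro W hW
    by_cases hcard : W.card ≤ 1
    · refine ⟨∅, by simp, ?_⟩
      intro u hu v hv _
      exact Finset.card_le_one.mp hcard u hu v hv
    · push_neg at hcard
      obtain ⟨u, hu, v, hv, huv⟩ := Finset.one_lt_card.mp hcard
      have hNne : insert u (G.neighborFinset u) ≠ insert v (G.neighborFinset v) :=
        fun h => huv (htwinfree u v h)
      rw [Ne, Finset.ext_iff] at hNne
      push_neg at hNne
      obtain ⟨w, hw⟩ := hNne
      set W1 := W.filter (fun z => w ∈ insert z (G.neighborFinset z)) with hW1def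
      set W2 := W.filter (fun z => w ∉ insert z (G.neighborFinset z)) with hW2def
      have hsum : W1.card + W2.card = W.card :=
        Finset.card_filter_add_card_filter_not _
      have h1ne : W1.Nonempty ∧ W2.Nonempty := by
        rcases hw with ⟨h, h'⟩ | ⟨h, h'⟩
        · exact ⟨⟨u, Finset.mem_filter.mpr ⟨hu, h⟩⟩, ⟨v, Finset.mem_filter.mpr ⟨hv, h'⟩⟩⟩
        · exact ⟨⟨v, Finset.mem_filter.mpr ⟨hv, h'⟩⟩, ⟨u, Finset.mem_filter.mpr ⟨hu, h⟩⟩⟩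
      have h1c : 1 ≤ W1.card := Finset.card_pos.mpr h1ne.1
      have h2c : 1 ≤ W2.card := Finset.card_pos.mpr h1ne.2
      have h1le : W1.card ≤ n := by omega
      have h2le : W2.card ≤ n := by omega
      obtain ⟨A1, hA1c, hA1⟩ := ih W1 h1le
      obtain ⟨A2, hA2c, hA2⟩ := ih W2 h2le
      refine ⟨insert w (A1 ∪ A2), ?_, ?_⟩
      · have : (insert w (A1 ∪ A2)).card ≤ A1.card + A2.card + 1 := by
          calc (insert w (A1 ∪ A2)).card ≤ (A1 ∪ A2).card + 1 := Finset.card_insert_le _ _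
            _ ≤ A1.card + A2.card + 1 := by
                have := Finset.card_union_le A1 A2; omega
        omega
      · intro a ha b hb hab
        have hwmem : (w ∈ insert a (G.neighborFinset a)) ↔ (w ∈ insert b (G.neighborFinset b)) := by
          constructor
          · intro h
            have : w ∈ insert a (G.neighborFinset a) ∩ insert w (A1 ∪ A2) :=
              Finset.mem_inter.mpr ⟨h, Finset.mem_insert_self _ _⟩
            rw [hab] at this
            exact (Finset.mem_inter.mp this).1
          · intro h
            have : w ∈ insert b (G.neighborFinset b) ∩ insert w (A1 ∪ A2) :=
              Finset.mem_inter.mpr ⟨h, Finset.mem_insert_self _ _⟩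
            rw [← hab] at this
            exact (Finset.mem_inter.mp this).1
        have hsub1 : A1 ⊆ insert w (A1 ∪ A2) :=
          fun x hx => Finset.mem_insert_of_mem (Finset.mem_union_left _ hx)
        have hsub2 : A2 ⊆ insert w (A1 ∪ A2) :=
          fun x hx => Finset.mem_insert_of_mem (Finset.mem_union_right _ hx)
        have hrestrict : ∀ (A' : Finset V), A' ⊆ insert w (A1 ∪ A2) →
            insert a (G.neighborFinset a) ∩ A' = insert b (G.neighborFinset b) ∩ A' := by
          intro A' hA'
          ext x
          simp only [Finset.mem_inter]
          constructor
          · rintro ⟨hx1, hx2⟩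
            have : x ∈ insert a (G.neighborFinset a) ∩ insert w (A1 ∪ A2) :=
              Finset.mem_inter.mpr ⟨hx1, hA' hx2⟩
            rw [hab] at this
            exact ⟨(Finset.mem_inter.mp this).1, hx2⟩
          · rintro ⟨hx1, hx2⟩
            have : x ∈ insert b (G.neighborFinset b) ∩ insert w (A1 ∪ A2) :=
              Finset.mem_inter.mpr ⟨hx1, hA' hx2⟩
            rw [← hab] at this
            exact ⟨(Finset.mem_inter.mp this).1, hx2⟩
        by_cases hwa : w ∈ insert a (G.neighborFinset a)
        · have hwb := hwmem.mp hwa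
          exact hA1 a (Finset.mem_filter.mpr ⟨ha, hwa⟩) b (Finset.mem_filter.mpr ⟨hb, hwb⟩)
            (hrestrict A1 hsub1)
        · have hwb := fun h => hwa (hwmem.mpr h)
          exact hA2 a (Finset.mem_filter.mpr ⟨ha, hwa⟩) b (Finset.mem_filter.mpr ⟨hb, hwb⟩)
            (hrestrict A2 hsub2)

/-- Let `G` be a twin-free graph of diameter 2. Then `β(G) ≤ γID(G) ≤ 2·β(G) + 2`,
stated via a minimum resolving set `S` (of size `β(G)`) and a minimum identifying code `C`
(of size `γID(G)`). -/
theorem stmt_2 {V : Type*} [Fintype V] [DecidableEq V]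
    (G : SimpleGraph V) [DecidableRel G.Adj]
    (hconn : G.Connected) (hdiam : ∀ u v : V, G.dist u v ≤ 2)
    (htwinfree : ∀ u v : V,
      insert u (G.neighborFinset u) = insert v (G.neighborFinset v) → u = v)
    (S : Finset V)
    (hres : ∀ u v : V, u ≠ v → ∃ x ∈ S, G.dist x u ≠ G.dist x v)
    (hSmin : ∀ T : Finset V,
      (∀ u v : V, u ≠ v → ∃ x ∈ T, G.dist x u ≠ G.dist x v) → S.card ≤ T.card)
    (C : Finset V)
    (hdom : ∀ u : V, ((insert u (G.neighborFinset u)) ∩ C).Nonempty)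
    (hsep : ∀ u v : V,
      (insert u (G.neighborFinset u)) ∩ C = (insert v (G.neighborFinset v)) ∩ C → u = v)
    (hCmin : ∀ D : Finset V,
      (∀ u : V, ((insert u (G.neighborFinset u)) ∩ D).Nonempty) →
      (∀ u v : V,
        (insert u (G.neighborFinset u)) ∩ D = (insert v (G.neighborFinset v)) ∩ D → u = v) →
      C.card ≤ D.card) :
    S.card ≤ C.card ∧ C.card ≤ 2 * S.card + 2 := by
  -- notation
  set N : V → Finset V := fun u => insert u (G.neighborFinset u) with hNdef
  -- distance facts
  have hdist2 : ∀ x u : V, x ∉ N u → G.dist x u = 2 := by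
    intro x u hx
    have hxu : x ≠ u := fun h => hx (h ▸ Finset.mem_insert_self _ _)
    have hadj : ¬ G.Adj x u := fun h => hx
      (Finset.mem_insert_of_mem ((G.mem_neighborFinset u x).mpr h.symm))
    have h0 : G.dist x u ≠ 0 := fun h => hxu (hconn.dist_eq_zero_iff.mp h)
    have h1 : G.dist x u ≠ 1 := fun h => hadj (SimpleGraph.dist_eq_one_iff_adj.mp h)
    have := hdiam x u
    omega
  have hdle1 : ∀ x u : V, x ∈ N u → G.dist x u ≤ 1 := by
    intro x u hx
    rcases Finset.mem_insert.mp hx with h | h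
    · subst h; simp [SimpleGraph.dist_self]
    · have : G.Adj x u := ((G.mem_neighborFinset u x).mp h).symm
      exact le_of_eq (SimpleGraph.dist_eq_one_iff_adj.mpr this)
  -- a separating vertex separates distances
  have hdistsep : ∀ x u v : V, x ∈ N u → x ∉ N v → G.dist x u ≠ G.dist x v := by
    intro x u v hxu hxv
    have := hdle1 x u hxu
    have := hdist2 x v hxv
    omega
  constructor
  · -- β ≤ γID : C is a resolving set
    apply hSmin
    intro u v huv
    have hNne : N u ∩ C ≠ N v ∩ C := fun h => huv (hsep u v h)
    rw [Ne, Finset.ext_iff] at hNne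
    push_neg at hNne
    obtain ⟨x, hx⟩ := hNne
    rcases hx with ⟨h, h'⟩ | ⟨h, h'⟩
    · obtain ⟨hxu, hxC⟩ := Finset.mem_inter.mp h
      have hxv : x ∉ N v := fun hxv => h' (Finset.mem_inter.mpr ⟨hxv, hxC⟩)
      exact ⟨x, hxC, hdistsep x u v hxu hxv⟩
    · obtain ⟨hxv, hxC⟩ := Finset.mem_inter.mp h'
      have hxu : x ∉ N u := fun hxu => h (Finset.mem_inter.mpr ⟨hxu, hxC⟩)
      exact ⟨x, hxC, fun he => hdistsep x v u hxv hxu he.symm⟩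
  · -- γID ≤ 2β + 2 : build an identifying code from S
    set f : V → Finset V := fun u => N u ∩ S with hfdef
    -- key: two vertices outside S with the same S-trace are equal
    have KEY : ∀ u v : V, u ∉ S → v ∉ S → f u = f v → u = v := by
      intro u v huS hvS hf
      by_contra huv
      obtain ⟨x, hxS, hd⟩ := hres u v huv
      apply hd
      by_cases hx : x ∈ N u
      · have hx' : x ∈ N v := by
          have : x ∈ f u := Finset.mem_inter.mpr ⟨hx, hxS⟩
          rw [hf] at this
          exact (Finset.mem_inter.mp this).1
        have h1 := hdle1 x u hx
        have h2 := hdle1 x v hx'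
        have h0u : G.dist x u ≠ 0 := fun h =>
          huS (hconn.dist_eq_zero_iff.mp h ▸ hxS)
        have h0v : G.dist x v ≠ 0 := fun h =>
          hvS (hconn.dist_eq_zero_iff.mp h ▸ hxS)
        omega
      · have hx' : x ∉ N v := by
          intro hx'
          have : x ∈ f v := Finset.mem_inter.mpr ⟨hx', hxS⟩
          rw [← hf] at this
          exact hx (Finset.mem_inter.mp this).1
        rw [hdist2 x u hx, hdist2 x v hx']
    set T : Finset (Finset V) := Finset.univ.image f with hTdef
    set fib : Finset V → Finset V := fun t => Finset.univ.filter (fun u => f u = t) with hfibdef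
    -- each fiber has at most one element outside S
    have hfibcard : ∀ t : Finset V, (fib t).card ≤ (fib t ∩ S).card + 1 := by
      intro t
      have hsd : (fib t \ S).card ≤ 1 := by
        apply Finset.card_le_one.mpr
        intro a ha b hb
        obtain ⟨ha1, ha2⟩ := Finset.mem_sdiff.mp ha
        obtain ⟨hb1, hb2⟩ := Finset.mem_sdiff.mp hb
        have hfa : f a = t := (Finset.mem_filter.mp ha1).2
        have hfb : f b = t := (Finset.mem_filter.mp hb1).2
        exact KEY a b ha2 hb2 (hfa.trans hfb.symm)
      have := Finset.card_inter_add_card_sdiff (fib t) S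
      omega
    -- separators for each fiber
    have hsep_all : ∀ t : Finset V, ∃ A : Finset V, A.card ≤ (fib t).card - 1 ∧
        ∀ u ∈ fib t, ∀ v ∈ fib t, N u ∩ A = N v ∩ A → u = v :=
      fun t => sep_aux G htwinfree (fib t).card (fib t) le_rfl
    choose g hg1 hg2 using hsep_all
    set E : Finset V := T.biUnion g with hEdef
    have hEcard : E.card ≤ S.card := by
      have h1 : E.card ≤ ∑ t ∈ T, (g t).card := Finset.card_biUnion_le
      have h2 : ∀ t ∈ T, (g t).card ≤ (fib t ∩ S).card := by
        intro t _
        have := hg1 t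
        have := hfibcard t
        have hpos : 1 ≤ (fib t).card := by
          obtain ⟨u, _, hu⟩ := Finset.mem_image.mp ‹t ∈ T›
          exact Finset.card_pos.mpr ⟨u, Finset.mem_filter.mpr ⟨Finset.mem_univ _, hu⟩⟩
        omega
      have h3 : ∑ t ∈ T, (fib t ∩ S).card = S.card := by
        have heq : ∀ t : Finset V, fib t ∩ S = S.filter (fun u => f u = t) := by
          intro t
          ext x
          simp [hfibdef, Finset.mem_filter, Finset.mem_inter, and_comm]
        rw [Finset.sum_congr rfl (fun t _ => by rw [heq t])]
        exact (Finset.card_eq_sum_card_fiberwise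
          (fun x _ => Finset.mem_image.mpr ⟨x, Finset.mem_univ _, rfl⟩)).symm
      calc E.card ≤ ∑ t ∈ T, (g t).card := h1
        _ ≤ ∑ t ∈ T, (fib t ∩ S).card := Finset.sum_le_sum h2
        _ = S.card := h3
    set U0 : Finset V := Finset.univ.filter (fun u => f u = ∅) with hU0def
    have hU0card : U0.card ≤ 1 := by
      apply Finset.card_le_one.mpr
      intro a ha b hb
      have hfa : f a = ∅ := (Finset.mem_filter.mp ha).2
      have hfb : f b = ∅ := (Finset.mem_filter.mp hb).2
      have haS : a ∉ S := by
        intro h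
        have : a ∈ f a := Finset.mem_inter.mpr ⟨Finset.mem_insert_self _ _, h⟩
        rw [hfa] at this; exact absurd this (Finset.notMem_empty a)
      have hbS : b ∉ S := by
        intro h
        have : b ∈ f b := Finset.mem_inter.mpr ⟨Finset.mem_insert_self _ _, h⟩
        rw [hfb] at this; exact absurd this (Finset.notMem_empty b)
      exact KEY a b haS hbS (hfa.trans hfb.symm)
    set D : Finset V := S ∪ E ∪ U0 with hDdef
    have hSD : S ⊆ D := fun x hx => Finset.mem_union_left _ (Finset.mem_union_left _ hx)
    have hED : E ⊆ D := fun x hx => Finset.mem_union_left _ (Finset.mem_union_right _ hx)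
    have hU0D : U0 ⊆ D := fun x hx => Finset.mem_union_right _ hx
    -- restriction trick
    have hrestrict : ∀ (u v : V) (A' : Finset V), A' ⊆ D → N u ∩ D = N v ∩ D →
        N u ∩ A' = N v ∩ A' := by
      intro u v A' hA' h
      ext x
      simp only [Finset.mem_inter]
      constructor
      · rintro ⟨hx1, hx2⟩
        have : x ∈ N u ∩ D := Finset.mem_inter.mpr ⟨hx1, hA' hx2⟩
        rw [h] at this
        exact ⟨(Finset.mem_inter.mp this).1, hx2⟩
      · rintro ⟨hx1, hx2⟩
        have : x ∈ N v ∩ D := Finset.mem_inter.mpr ⟨hx1, hA' hx2⟩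
        rw [← h] at this
        exact ⟨(Finset.mem_inter.mp this).1, hx2⟩
    have hdomD : ∀ u : V, (N u ∩ D).Nonempty := by
      intro u
      by_cases h : f u = ∅
      · refine ⟨u, Finset.mem_inter.mpr ⟨Finset.mem_insert_self _ _, ?_⟩⟩
        exact hU0D (Finset.mem_filter.mpr ⟨Finset.mem_univ _, h⟩)
      · obtain ⟨x, hx⟩ := Finset.nonempty_iff_ne_empty.mpr h
        obtain ⟨hx1, hx2⟩ := Finset.mem_inter.mp hx
        exact ⟨x, Finset.mem_inter.mpr ⟨hx1, hSD hx2⟩⟩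
    have hsepD : ∀ u v : V, N u ∩ D = N v ∩ D → u = v := by
      intro u v h
      have hfS : f u = f v := hrestrict u v S hSD h
      have hgin : g (f u) ⊆ D := by
        intro x hx
        apply hED
        exact Finset.mem_biUnion.mpr ⟨f u, Finset.mem_image.mpr ⟨u, Finset.mem_univ _, rfl⟩, hx⟩
      have hu : u ∈ fib (f u) := Finset.mem_filter.mpr ⟨Finset.mem_univ _, rfl⟩
      have hv : v ∈ fib (f u) := Finset.mem_filter.mpr ⟨Finset.mem_univ _, hfS.symm⟩
      exact hg2 (f u) u hu v hv (hrestrict u v (g (f u)) hgin h)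
    have hC := hCmin D hdomD hsepD
    have hDcard : D.card ≤ 2 * S.card + 2 := by
      have h1 : D.card ≤ (S ∪ E).card + U0.card := Finset.card_union_le _ _
      have h2 : (S ∪ E).card ≤ S.card + E.card := Finset.card_union_le _ _
      omega
    omega
end

section
/- Let G be a vertex-transitive twin-free graph on n vertices with vertex degree k, and let d be the minimum of |N[u] Δ N[v]| over all pairs of distinct vertices. Then the optimal value of the fractional identifying code LP equals n / min(k+1, d). -/
open Finset

lemma aux_image_nc {V : Type*} [Fintype V] [DecidableEq V] (G : SimpleGraph V)
    [DecidableRel G.Adj] (φ : G ≃g G) (u : V) :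
    Finset.image φ (insert u (G.neighborFinset u)) = insert (φ u) (G.neighborFinset (φ u)) := by
  ext w
  simp only [mem_image, mem_insert, SimpleGraph.mem_neighborFinset]
  constructor
  · rintro ⟨a, ha | ha, rfl⟩
    · exact Or.inl (by rw [ha])
    · exact Or.inr (φ.map_adj_iff.mpr ha)
  · rintro (rfl | h)
    · exact ⟨u, Or.inl rfl, rfl⟩
    · refine ⟨φ.symm w, Or.inr ?_, by simp⟩
      have := φ.map_adj_iff (v := u) (w := φ.symm w)
      simp only [RelIso.apply_symm_apply] at this
      exact this.mp (by simpa using h)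

/-- For a twin-free vertex-transitive graph `G` with degree `k` and minimum symmetric
difference of closed neighbourhoods `d`, the optimal value of the fractional identifying
code LP equals `|V| / min(k+1, d)`. -/
theorem stmt_4 {V : Type*} [Fintype V] [DecidableEq V]
    (G : SimpleGraph V) [DecidableRel G.Adj]
    (htrans : ∀ u v : V, ∃ φ : G ≃g G, φ u = v)
    (htwinfree : ∀ u v : V,
      insert u (G.neighborFinset u) = insert v (G.neighborFinset v) → u = v)
    (k d : ℕ) (hreg : G.IsRegularOfDegree k)
    (hd : IsLeast {m : ℕ | ∃ u v : V, u ≠ v ∧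
      m = (symmDiff (insert u (G.neighborFinset u)) (insert v (G.neighborFinset v))).card} d) :
    IsLeast {y : ℝ | ∃ x : V → ℝ,
      (∀ v : V, 0 ≤ x v ∧ x v ≤ 1) ∧
      (∀ u : V, 1 ≤ ∑ w ∈ insert u (G.neighborFinset u), x w) ∧
      (∀ u v : V, u ≠ v →
        1 ≤ ∑ w ∈ symmDiff (insert u (G.neighborFinset u)) (insert v (G.neighborFinset v)), x w) ∧
      y = ∑ v : V, x v}
      ((Fintype.card V : ℝ) / (min (k + 1) d : ℕ)) := by
  classical
  obtain ⟨⟨u₀, v₀, huv₀, hcard₀⟩, hlb⟩ := hd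
  haveI : Nonempty V := ⟨u₀⟩
  have hn0 : 0 < Fintype.card V := Fintype.card_pos
  set n := Fintype.card V with hn
  have hd1 : 1 ≤ d := by
    rcases Nat.eq_zero_or_pos d with h0 | h; swap; · exact h
    exfalso
    rw [h0] at hcard₀
    have h1 : symmDiff (insert u₀ (G.neighborFinset u₀)) (insert v₀ (G.neighborFinset v₀)) = ∅ :=
      Finset.card_eq_zero.mp hcard₀.symm
    exact huv₀ (htwinfree u₀ v₀ (symmDiff_eq_bot.mp h1))
  set m := min (k + 1) d with hm
  have hm1 : 1 ≤ m := le_min (Nat.succ_le_succ (Nat.zero_le _)) hd1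
  have hmR : (0:ℝ) < (m:ℝ) := by exact_mod_cast hm1
  have hNcard : ∀ u : V, (insert u (G.neighborFinset u)).card = k + 1 := fun u => by
    rw [Finset.card_insert_of_notMem (G.notMem_neighborFinset_self u)]
    exact congrArg Nat.succ (hreg u)
  constructor
  · -- the constant assignment 1/m is feasible with value n/m
    refine ⟨fun _ => ((m:ℝ))⁻¹, fun v => ⟨by positivity, ?_⟩, ?_, ?_, ?_⟩
    · have h1 : (1:ℝ) ≤ (m:ℝ) := by exact_mod_cast hm1
      exact inv_le_one_of_one_le₀ h1
    · intro u
      rw [Finset.sum_const, hNcard u, nsmul_eq_mul, ← div_eq_mul_inv, le_div_iff₀ hmR, one_mul]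
      exact_mod_cast min_le_left (k+1) d
    · intro u v huv
      rw [Finset.sum_const, nsmul_eq_mul, ← div_eq_mul_inv, le_div_iff₀ hmR, one_mul]
      have : d ≤ (symmDiff (insert u (G.neighborFinset u))
          (insert v (G.neighborFinset v))).card := hlb ⟨u, v, huv, rfl⟩
      exact_mod_cast le_trans (min_le_right (k+1) d) this
    · rw [Finset.sum_const, Finset.card_univ, nsmul_eq_mul, ← div_eq_mul_inv]
  · rintro y ⟨x, hx01, hdom, hsep, rfl⟩
    set T := ∑ v : V, x v with hT
    have hT0 : 0 ≤ T := Finset.sum_nonneg fun v _ => (hx01 v).1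
    have claim1 : (n:ℝ) ≤ ((k:ℝ)+1) * T := by
      have h1 : (n:ℝ) ≤ ∑ u : V, ∑ w ∈ insert u (G.neighborFinset u), x w := by
        calc (n:ℝ) = ∑ _u : V, 1 := by simp [hn]
          _ ≤ _ := Finset.sum_le_sum fun u _ => hdom u
      have h2 : ∑ u : V, ∑ w ∈ insert u (G.neighborFinset u), x w
          = ∑ w : V, ∑ u ∈ insert w (G.neighborFinset w), x w := by
        refine Finset.sum_comm' ?_
        intro u w
        simp only [Finset.mem_univ, true_and, and_true, Finset.mem_insert,
          SimpleGraph.mem_neighborFinset]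
        exact or_congr eq_comm (G.adj_comm u w)
      calc (n:ℝ) ≤ _ := h1
        _ = ∑ w : V, ∑ u ∈ insert w (G.neighborFinset w), x w := h2
        _ = ∑ w : V, ((k:ℝ)+1) * x w := by
            refine Finset.sum_congr rfl fun w _ => ?_
            rw [Finset.sum_const, hNcard w, nsmul_eq_mul]
            push_cast; ring
        _ = ((k:ℝ)+1) * T := by rw [← Finset.mul_sum]
    have claim2 : (n:ℝ) ≤ (d:ℝ) * T := by
      haveI : Fintype (G ≃g G) := Fintype.ofInjective (fun φ => (φ.toEquiv : V ≃ V))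
        (fun a b h => by cases a; cases b; simpa using h)
      set N := Fintype.card (G ≃g G) with hN
      have hNpos : 0 < N := Fintype.card_pos_iff.mpr ⟨RelIso.refl _⟩
      set A : V → ℝ := fun s => ∑ φ : G ≃g G, x (φ s) with hA
      have hAconst : ∀ s s' : V, A s = A s' := by
        intro s s'
        obtain ⟨ψ, hψ⟩ := htrans s s'
        simp only [hA]
        refine Fintype.sum_equiv
          ⟨fun φ => ψ.symm.trans φ, fun φ => ψ.trans φ, fun φ => ?_, fun φ => ?_⟩ _ _ fun φ => ?_
        · exact RelIso.ext fun v => by simp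
        · exact RelIso.ext fun v => by simp
        · simp [← hψ]
      have hsumA : (n:ℝ) * A u₀ = (N:ℝ) * T := by
        have h1 : ∑ s' : V, A s' = (n:ℝ) * A u₀ := by
          rw [Finset.sum_congr rfl fun s' _ => hAconst s' u₀, Finset.sum_const,
            Finset.card_univ, nsmul_eq_mul]
        have h2 : ∑ s' : V, A s' = (N:ℝ) * T := by
          rw [hA]
          rw [Finset.sum_comm]
          have : ∀ φ : G ≃g G, ∑ s' : V, x (φ s') = T :=
            fun φ => Equiv.sum_comp φ.toEquiv x
          rw [Finset.sum_congr rfl fun φ _ => this φ, Finset.sum_const, Finset.card_univ,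
            nsmul_eq_mul]
        rw [← h1, h2]
      set S₀ := symmDiff (insert u₀ (G.neighborFinset u₀)) (insert v₀ (G.neighborFinset v₀))
        with hS₀
      have hcardS₀ : S₀.card = d := hcard₀.symm
      have hsep' : ∀ φ : G ≃g G, 1 ≤ ∑ s ∈ S₀, x (φ s) := by
        intro φ
        have hne : φ u₀ ≠ φ v₀ := fun h => huv₀ (φ.injective h)
        have hh := hsep (φ u₀) (φ v₀) hne
        have himg : Finset.image φ S₀ = symmDiff (insert (φ u₀) (G.neighborFinset (φ u₀)))
            (insert (φ v₀) (G.neighborFinset (φ v₀))) := by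
          rw [hS₀, Finset.image_symmDiff _ _ φ.injective, aux_image_nc, aux_image_nc]
        rw [← himg, Finset.sum_image (fun a _ b _ h => φ.injective h)] at hh
        exact hh
      have hNle : (N:ℝ) ≤ ∑ φ : G ≃g G, ∑ s ∈ S₀, x (φ s) := by
        calc (N:ℝ) = ∑ _φ : G ≃g G, 1 := by simp [hN]
          _ ≤ _ := Finset.sum_le_sum fun φ _ => hsep' φ
      have heq : ∑ φ : G ≃g G, ∑ s ∈ S₀, x (φ s) = ∑ s ∈ S₀, A s := Finset.sum_comm
      have heq2 : ∑ s ∈ S₀, A s = (d:ℝ) * A u₀ := by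
        rw [Finset.sum_congr rfl fun s _ => hAconst s u₀, Finset.sum_const, hcardS₀,
          nsmul_eq_mul]
      have h3 : (N:ℝ) ≤ (d:ℝ) * A u₀ := by rw [← heq2, ← heq]; exact hNle
      have hn' : (0:ℝ) < n := by exact_mod_cast hn0
      have hN' : (0:ℝ) < N := by exact_mod_cast hNpos
      nlinarith [mul_le_mul_of_nonneg_left h3 hn'.le, hsumA, hn', hN']
    rw [div_le_iff₀ hmR]
    rcases min_cases (k + 1) d with ⟨hmin, _⟩ | ⟨hmin, _⟩
    · rw [hm, hmin]
      push_cast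
      linarith [claim1]
    · rw [hm, hmin]
      linarith [claim2]
end

section
/- Let q > 2 be a power of 2 and consider T₂*(O), the generalized quadrangle GQ(q−1, q+1) built from a hyperconic O in PG(3,q). The set of affine points of three lines of T₂*(O) through the nucleus N that span PG(3,q) forms an identifying code of the point graph of T₂*(O), of size 3q. -/
/-- The point graph of `T₂*(O)` for the hyperconic `O = C ∪ {N}` in `PG(3,q)`, `q` even:
vertices are the affine points `(1,a,b,c)` (identified with `(a,b,c) ∈ F³`), and two distinct
points are adjacent iff the direction of the line joining them lies on `O`, i.e. the point at
infinity `(0, a−α, b−β, c−γ)` satisfies `X₁X₃ = X₂²` (a point of the conic `C`) or is the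
nucleus `N = (0,0,1,0)` (i.e. `a−α = 0` and `c−γ = 0`). -/
def t2starGraph (F : Type*) [Field F] : SimpleGraph (F × F × F) where
  Adj P R := P ≠ R ∧
    ((P.1 - R.1) * (P.2.2 - R.2.2) = (P.2.1 - R.2.1) ^ 2 ∨ (P.1 = R.1 ∧ P.2.2 = R.2.2))
  symm := by
    constructor
    rintro P R ⟨hne, h⟩
    refine ⟨hne.symm, ?_⟩
    rcases h with h | h
    · left; linear_combination h
    · right; exact ⟨h.1.symm, h.2.symm⟩
  loopless := by constructor; rintro P ⟨h, -⟩; exact h rfl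

/-- Let `q > 2` be a power of 2. The set of affine points of three lines of `T₂*(O)`
through the nucleus `N` (i.e. lines with direction `(0,1,0)` through base points
`P 0, P 1, P 2`) that span `PG(3,q)` is an identifying code of the point graph of
`T₂*(O)`, of size `3q`. -/
theorem stmt_17 (q : ℕ) (hq2 : 2 < q) (hq : ∃ e : ℕ, q = 2 ^ e)
    (F : Type*) [Field F] [Fintype F] (hcard : Fintype.card F = q)
    (P : Fin 3 → F × F × F)
    (hspan : LinearIndependent F
      ![![1, (P 0).1, (P 0).2.1, (P 0).2.2],
        ![1, (P 1).1, (P 1).2.1, (P 1).2.2],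
        ![1, (P 2).1, (P 2).2.1, (P 2).2.2],
        ![0, 0, 1, 0]]) :
    (∀ u : F × F × F,
      ((insert u ((t2starGraph F).neighborSet u)) ∩
        {R : F × F × F | ∃ i : Fin 3, ∃ c : F,
          R = ((P i).1, (P i).2.1 + c, (P i).2.2)}).Nonempty) ∧
    (∀ u v : F × F × F,
      (insert u ((t2starGraph F).neighborSet u)) ∩
        {R : F × F × F | ∃ i : Fin 3, ∃ c : F,
          R = ((P i).1, (P i).2.1 + c, (P i).2.2)} =
      (insert v ((t2starGraph F).neighborSet v)) ∩
        {R : F × F × F | ∃ i : Fin 3, ∃ c : F,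
          R = ((P i).1, (P i).2.1 + c, (P i).2.2)} → u = v) ∧
    ({R : F × F × F | ∃ i : Fin 3, ∃ c : F,
        R = ((P i).1, (P i).2.1 + c, (P i).2.2)}).ncard = 3 * q := by
  classical
  -- characteristic 2
  obtain ⟨e, he⟩ := hq
  have hprime : (ringChar F).Prime := CharP.char_is_prime F (ringChar F)
  have hqz : ((q : ℕ) : F) = 0 := by rw [← hcard]; exact FiniteField.cast_card_eq_zero F
  have hdvd : ringChar F ∣ q := (CharP.cast_eq_zero_iff F (ringChar F) q).mp hqz
  have hchar2 : ringChar F = 2 := by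
    rw [he] at hdvd
    exact (Nat.prime_dvd_prime_iff_eq hprime Nat.prime_two).mp (hprime.dvd_of_dvd_pow hdvd)
  have h2 : (2 : F) = 0 := by
    have h := CharP.cast_eq_zero F (ringChar F)
    rw [hchar2] at h
    exact_mod_cast h
  -- squaring is a bijection
  have hsqinj : ∀ x y : F, x ^ 2 = y ^ 2 → x = y := by
    intro x y hxy
    have hz : (x - y) ^ 2 = 0 := by linear_combination hxy + (y ^ 2 - x * y) * h2
    have := pow_eq_zero_iff (two_ne_zero) |>.mp hz
    exact sub_eq_zero.mp this
  have hsqsurj : ∀ t : F, ∃ s : F, s ^ 2 = t := by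
    have hsurj : Function.Surjective (fun x : F => x ^ 2) :=
      Finite.injective_iff_surjective.mp (fun x y h => hsqinj x y h)
    exact fun t => hsurj t
  -- linear independence, concretely
  have hind : ∀ x y : F,
      x * ((P 1).1 - (P 0).1) + y * ((P 2).1 - (P 0).1) = 0 →
      x * ((P 1).2.2 - (P 0).2.2) + y * ((P 2).2.2 - (P 0).2.2) = 0 →
      x = 0 ∧ y = 0 := by
    intro x y hA hC
    have H := Fintype.linearIndependent_iff.mp hspan
      ![-(x + y), x, y, (x + y) * (P 0).2.1 - x * (P 1).2.1 - y * (P 2).2.1] ?_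
    · exact ⟨H 1, H 2⟩
    · funext j
      simp only [Fin.sum_univ_four, Pi.add_apply, Pi.smul_apply, smul_eq_mul, Pi.zero_apply]
      fin_cases j
      · simp
      · simp only [Matrix.cons_val_zero, Matrix.cons_val_one, Matrix.head_cons]
        simp
        linear_combination hA
      · simp
        ring
      · simp
        linear_combination hC
  -- the three base points have pairwise distinct (1st, 3rd) coordinates
  have h01 : ¬((P 0).1 = (P 1).1 ∧ (P 0).2.2 = (P 1).2.2) := by
    rintro ⟨hA, hC⟩
    exact one_ne_zero
      ((hind 1 0 (by linear_combination -hA) (by linear_combination -hC)).1)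
  have h02 : ¬((P 0).1 = (P 2).1 ∧ (P 0).2.2 = (P 2).2.2) := by
    rintro ⟨hA, hC⟩
    exact one_ne_zero
      ((hind 0 1 (by linear_combination -hA) (by linear_combination -hC)).2)
  have h12 : ¬((P 1).1 = (P 2).1 ∧ (P 1).2.2 = (P 2).2.2) := by
    rintro ⟨hA, hC⟩
    exact one_ne_zero
      ((hind 1 (-1) (by linear_combination hA) (by linear_combination hC)).1)
  have hpair : ∀ i j : Fin 3, i ≠ j → ¬((P i).1 = (P j).1 ∧ (P i).2.2 = (P j).2.2) := by
    intro i j hij hcon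
    fin_cases i <;> fin_cases j <;>
      first
        | exact hij rfl
        | exact h01 hcon
        | exact h01 ⟨hcon.1.symm, hcon.2.symm⟩
        | exact h02 hcon
        | exact h02 ⟨hcon.1.symm, hcon.2.symm⟩
        | exact h12 hcon
        | exact h12 ⟨hcon.1.symm, hcon.2.symm⟩
  -- the 2×2 determinant is nonzero
  have hdet : ((P 1).1 - (P 0).1) * ((P 2).2.2 - (P 0).2.2) -
      ((P 2).1 - (P 0).1) * ((P 1).2.2 - (P 0).2.2) ≠ 0 := by
    intro hD
    obtain ⟨hc2, hc1⟩ := hind ((P 2).2.2 - (P 0).2.2) (-((P 1).2.2 - (P 0).2.2))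
      (by linear_combination hD) (by ring)
    obtain ⟨ha2, ha1⟩ := hind ((P 2).1 - (P 0).1) (-((P 1).1 - (P 0).1))
      (by ring)
      (by linear_combination (-((P 2).1 - (P 0).1)) * hc1 + (-((P 1).1 - (P 0).1)) * hc2)
    exact hpair 0 1 (by decide) ⟨by linear_combination ha1, by linear_combination hc1⟩
  -- uniqueness of representation of code points
  have huniq : ∀ (i j : Fin 3) (cc c' : F),
      (((P i).1, (P i).2.1 + cc, (P i).2.2) : F × F × F) =
        ((P j).1, (P j).2.1 + c', (P j).2.2) → i = j ∧ cc = c' := by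
    intro i j cc c' h
    rw [Prod.mk.injEq, Prod.mk.injEq] at h
    obtain ⟨h1, hb, h3⟩ := h
    have hij : i = j := by
      by_contra hne
      exact hpair i j hne ⟨h1, h3⟩
    subst hij
    exact ⟨rfl, by linear_combination hb⟩
  -- membership characterization
  have hmem : ∀ u R : F × F × F,
      (R ∈ (insert u ((t2starGraph F).neighborSet u)) ∩
        {R : F × F × F | ∃ i : Fin 3, ∃ c : F, R = ((P i).1, (P i).2.1 + c, (P i).2.2)}) ↔
      ∃ i : Fin 3, ∃ c : F, R = ((P i).1, (P i).2.1 + c, (P i).2.2) ∧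
        ((u.1 = (P i).1 ∧ u.2.2 = (P i).2.2) ∨
          (u.1 - (P i).1) * (u.2.2 - (P i).2.2) = (u.2.1 - ((P i).2.1 + c)) ^ 2) := by
    intro u R
    constructor
    · rintro ⟨hN, i, cc, rfl⟩
      refine ⟨i, cc, rfl, ?_⟩
      rcases Set.mem_insert_iff.mp hN with h | h
      · exact Or.inl ⟨by rw [← h], by rw [← h]⟩
      · have hadj : (t2starGraph F).Adj u ((P i).1, (P i).2.1 + cc, (P i).2.2) := h
        rcases hadj.2 with h' | h'
        · exact Or.inr h'
        · exact Or.inl h'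
    · rintro ⟨i, cc, rfl, hcond⟩
      refine ⟨?_, i, cc, rfl⟩
      by_cases hRu : (((P i).1, (P i).2.1 + cc, (P i).2.2) : F × F × F) = u
      · exact Set.mem_insert_iff.mpr (Or.inl hRu)
      · apply Set.mem_insert_of_mem
        show (t2starGraph F).Adj u _
        refine ⟨fun hh => hRu hh.symm, ?_⟩
        rcases hcond with h | h
        · exact Or.inr h
        · exact Or.inl h
  refine ⟨?_, ?_, ?_⟩
  · -- nonempty
    intro u
    by_cases h : u.1 = (P 0).1 ∧ u.2.2 = (P 0).2.2
    · refine ⟨u, Set.mem_insert _ _, 0, u.2.1 - (P 0).2.1, ?_⟩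
      exact Prod.ext h.1 (Prod.ext (by ring) h.2)
    · obtain ⟨s, hs⟩ := hsqsurj ((u.1 - (P 0).1) * (u.2.2 - (P 0).2.2))
      refine ⟨((P 0).1, (P 0).2.1 + (u.2.1 - (P 0).2.1 - s), (P 0).2.2),
        Set.mem_insert_of_mem _ ?_, 0, u.2.1 - (P 0).2.1 - s, rfl⟩
      show (t2starGraph F).Adj u _
      refine ⟨fun hu => h ⟨by rw [hu], by rw [hu]⟩, Or.inl ?_⟩
      show (u.1 - (P 0).1) * (u.2.2 - (P 0).2.2) =
        (u.2.1 - ((P 0).2.1 + (u.2.1 - (P 0).2.1 - s))) ^ 2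
      linear_combination -hs
  · -- identifying
    intro u v hEq
    have hkey : ∀ (i : Fin 3) (cc : F),
        ((u.1 = (P i).1 ∧ u.2.2 = (P i).2.2) ∨
          (u.1 - (P i).1) * (u.2.2 - (P i).2.2) = (u.2.1 - ((P i).2.1 + cc)) ^ 2) ↔
        ((v.1 = (P i).1 ∧ v.2.2 = (P i).2.2) ∨
          (v.1 - (P i).1) * (v.2.2 - (P i).2.2) = (v.2.1 - ((P i).2.1 + cc)) ^ 2) := by
      intro i cc
      constructor
      · intro hc
        have hmemu := (hmem u _).mpr ⟨i, cc, rfl, hc⟩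
        rw [hEq] at hmemu
        obtain ⟨j, c', hRe, hcond⟩ := (hmem v _).mp hmemu
        obtain ⟨hij, hcc⟩ := huniq i j cc c' hRe
        subst hij; subst hcc
        exact hcond
      · intro hc
        have hmemv := (hmem v _).mpr ⟨i, cc, rfl, hc⟩
        rw [← hEq] at hmemv
        obtain ⟨j, c', hRe, hcond⟩ := (hmem u _).mp hmemv
        obtain ⟨hij, hcc⟩ := huniq i j cc c' hRe
        subst hij; subst hcc
        exact hcond
    have hforce : ∀ w z : F × F × F,
        (∀ (i : Fin 3) (cc : F),
          ((w.1 = (P i).1 ∧ w.2.2 = (P i).2.2) ∨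
            (w.1 - (P i).1) * (w.2.2 - (P i).2.2) = (w.2.1 - ((P i).2.1 + cc)) ^ 2) →
          ((z.1 = (P i).1 ∧ z.2.2 = (P i).2.2) ∨
            (z.1 - (P i).1) * (z.2.2 - (P i).2.2) = (z.2.1 - ((P i).2.1 + cc)) ^ 2)) →
        ∀ i : Fin 3, w.1 = (P i).1 ∧ w.2.2 = (P i).2.2 →
          z.1 = (P i).1 ∧ z.2.2 = (P i).2.2 := by
      intro w z hiff i hw
      by_contra hz
      have hzc : ∀ cc : F,
          (z.1 - (P i).1) * (z.2.2 - (P i).2.2) = (z.2.1 - ((P i).2.1 + cc)) ^ 2 := by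
        intro cc
        rcases hiff i cc (Or.inl hw) with h | h
        · exact absurd h hz
        · exact h
      have h0 := hzc (z.2.1 - (P i).2.1)
      have h1 := hzc (z.2.1 - (P i).2.1 - 1)
      exact one_ne_zero (α := F) (by linear_combination h0 - h1)
    by_cases hA : ∃ i : Fin 3, u.1 = (P i).1 ∧ u.2.2 = (P i).2.2
    · obtain ⟨i, hui⟩ := hA
      have hvi := hforce u v (fun i cc => (hkey i cc).mp) i hui
      obtain ⟨j, hji⟩ : ∃ j : Fin 3, j ≠ i := by
        rcases eq_or_ne i 0 with h | h
        · exact ⟨1, by rw [h]; decide⟩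
        · exact ⟨0, Ne.symm h⟩
      have hnvj : ¬(v.1 = (P j).1 ∧ v.2.2 = (P j).2.2) := by
        rintro ⟨hx, hy⟩
        exact hpair j i hji ⟨hx.symm.trans hvi.1, hy.symm.trans hvi.2⟩
      obtain ⟨s, hs⟩ := hsqsurj ((u.1 - (P j).1) * (u.2.2 - (P j).2.2))
      have hcu : (u.1 - (P j).1) * (u.2.2 - (P j).2.2) =
          (u.2.1 - ((P j).2.1 + (u.2.1 - (P j).2.1 - s))) ^ 2 := by
        linear_combination -hs
      rcases (hkey j (u.2.1 - (P j).2.1 - s)).mp (Or.inr hcu) with h | h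
      · exact absurd h hnvj
      · have h13 : u.1 = v.1 := hui.1.trans hvi.1.symm
        have h33 : u.2.2 = v.2.2 := hui.2.trans hvi.2.symm
        have h22 : u.2.1 = v.2.1 := by
          have heq2 := hsqinj (u.2.1 - ((P j).2.1 + (u.2.1 - (P j).2.1 - s)))
            (v.2.1 - ((P j).2.1 + (u.2.1 - (P j).2.1 - s)))
            (by linear_combination -hcu + h + (u.2.2 - (P j).2.2) * h13 +
              (v.1 - (P j).1) * h33)
          linear_combination heq2
        exact Prod.ext h13 (Prod.ext h22 h33)
    · rw [not_exists] at hA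
      have hBv : ∀ i : Fin 3, ¬(v.1 = (P i).1 ∧ v.2.2 = (P i).2.2) := by
        intro i hv
        exact hA i (hforce v u (fun i cc => (hkey i cc).mpr) i hv)
      have hE : ∀ i : Fin 3, (u.2.1 - v.2.1) ^ 2 =
          (u.1 - (P i).1) * (u.2.2 - (P i).2.2) -
          (v.1 - (P i).1) * (v.2.2 - (P i).2.2) := by
        intro i
        obtain ⟨s, hs⟩ := hsqsurj ((u.1 - (P i).1) * (u.2.2 - (P i).2.2))
        have hcu : (u.1 - (P i).1) * (u.2.2 - (P i).2.2) =
            (u.2.1 - ((P i).2.1 + (u.2.1 - (P i).2.1 - s))) ^ 2 := by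
          linear_combination -hs
        rcases (hkey i (u.2.1 - (P i).2.1 - s)).mp (Or.inr hcu) with h | h
        · exact absurd h (hBv i)
        · linear_combination h - hcu +
            ((v.2.1 - ((P i).2.1 + (u.2.1 - (P i).2.1 - s))) ^ 2 -
             (u.2.1 - ((P i).2.1 + (u.2.1 - (P i).2.1 - s))) *
             (v.2.1 - ((P i).2.1 + (u.2.1 - (P i).2.1 - s)))) * h2
      have eq1 : ((P 1).1 - (P 0).1) * (u.2.2 - v.2.2) +
          ((P 1).2.2 - (P 0).2.2) * (u.1 - v.1) = 0 := by
        linear_combination hE 1 - hE 0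
      have eq2 : ((P 2).1 - (P 0).1) * (u.2.2 - v.2.2) +
          ((P 2).2.2 - (P 0).2.2) * (u.1 - v.1) = 0 := by
        linear_combination hE 2 - hE 0
      have hw1 : u.1 - v.1 = 0 := by
        have hz : (((P 1).1 - (P 0).1) * ((P 2).2.2 - (P 0).2.2) -
            ((P 2).1 - (P 0).1) * ((P 1).2.2 - (P 0).2.2)) * (u.1 - v.1) = 0 := by
          linear_combination ((P 1).1 - (P 0).1) * eq2 - ((P 2).1 - (P 0).1) * eq1
        exact (mul_eq_zero.mp hz).resolve_left hdet
      have hw3 : u.2.2 - v.2.2 = 0 := by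
        have hz : (((P 1).1 - (P 0).1) * ((P 2).2.2 - (P 0).2.2) -
            ((P 2).1 - (P 0).1) * ((P 1).2.2 - (P 0).2.2)) * (u.2.2 - v.2.2) = 0 := by
          linear_combination ((P 2).2.2 - (P 0).2.2) * eq1 - ((P 1).2.2 - (P 0).2.2) * eq2
        exact (mul_eq_zero.mp hz).resolve_left hdet
      have hw2 : u.2.1 - v.2.1 = 0 := by
        have hz : (u.2.1 - v.2.1) ^ 2 = 0 := by
          linear_combination hE 0 + (u.2.2 - (P 0).2.2) * hw1 + (v.1 - (P 0).1) * hw3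
        exact pow_eq_zero_iff (two_ne_zero) |>.mp hz
      exact Prod.ext (sub_eq_zero.mp hw1) (Prod.ext (sub_eq_zero.mp hw2) (sub_eq_zero.mp hw3))
  · -- cardinality
    have hinj : Function.Injective
        (fun p : Fin 3 × F => (((P p.1).1, (P p.1).2.1 + p.2, (P p.1).2.2) : F × F × F)) := by
      rintro ⟨i, ci⟩ ⟨j, cj⟩ h
      obtain ⟨hij, hc⟩ := huniq i j ci cj h
      rw [hij, hc]
    have hSeq : {R : F × F × F | ∃ i : Fin 3, ∃ c : F,
        R = ((P i).1, (P i).2.1 + c, (P i).2.2)} =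
        Set.range (fun p : Fin 3 × F =>
          (((P p.1).1, (P p.1).2.1 + p.2, (P p.1).2.2) : F × F × F)) := by
      ext R
      constructor
      · rintro ⟨i, cc, rfl⟩; exact ⟨(i, cc), rfl⟩
      · rintro ⟨⟨i, cc⟩, rfl⟩; exact ⟨i, cc, rfl⟩
    rw [hSeq, ← Nat.card_coe_set_eq, Nat.card_range_of_injective hinj,
      Nat.card_eq_fintype_card, Fintype.card_prod, Fintype.card_fin, hcard]
end
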